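/- For every index j ∈ {0,…,N−1}, the expectation over θ drawn uniformly from [−π, π] satisfies E_θ[x_j(θ)²] = 1/N. -/

import Mathlib

open Real Finset

/-- The random vector `x(θ) ∈ ℝ^N`: with `n = ⌈log₂ N⌉` and `ω_j = 2^j`,
`x_i(θ) = √(2^n/N) ∏_{j=1}^n cos(ω_j θ)^{1−b_{ij}} sin(ω_j θ)^{b_{ij}}`, where
`b_{i1}…b_{in}` is the `n`-bit binary representation of `i` (`b_{i1}` most significant). -/
noncomputable def xvec (N : ℕ) (θ : ℝ) (i : Fin N) : ℝ :=
  Real.sqrt ((2 : ℝ) ^ (Nat.clog 2 N) / N) *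
    ∏ j ∈ Finset.Icc 1 (Nat.clog 2 N),
      if i.val / 2 ^ (Nat.clog 2 N - j) % 2 = 1
      then Real.sin ((2 : ℝ) ^ j * θ)
      else Real.cos ((2 : ℝ) ^ j * θ)

noncomputable def trg (b : Bool) (x : ℝ) : ℝ := if b then Real.sin x else Real.cos x

noncomputable def prodf (n : ℕ) (h : ℕ → Bool) (θ : ℝ) : ℝ :=
  ∏ j ∈ Finset.range n, (trg (h j) (2 ^ j * θ)) ^ 2

lemma trg_sq_add_nat_pi (b : Bool) (k : ℕ) (x : ℝ) :
    trg b (x + k * π) ^ 2 = trg b x ^ 2 := by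
  cases b <;> simp [trg, Real.sin_add_nat_mul_pi, Real.cos_add_nat_mul_pi, mul_pow,
    ← pow_mul, pow_mul' (-1 : ℝ)]

lemma cont_trg (b : Bool) (c : ℝ) : Continuous fun θ : ℝ => trg b (c * θ) ^ 2 := by
  cases b <;> simp only [trg, Bool.false_eq_true, if_false, if_true] <;> fun_prop

lemma cont_prodf (n : ℕ) (h : ℕ → Bool) : Continuous (prodf n h) := by
  unfold prodf
  exact continuous_finset_prod _ fun j _ => cont_trg (h j) _

lemma prodf_periodic (n : ℕ) (h : ℕ → Bool) : Function.Periodic (prodf n h) π := by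
  intro x
  unfold prodf
  refine Finset.prod_congr rfl fun j _ => ?_
  have : (2:ℝ) ^ j * (x + π) = 2 ^ j * x + (2^j : ℕ) * π := by push_cast; ring
  rw [this, trg_sq_add_nat_pi]

lemma integral_comp_two (F : ℝ → ℝ) (hper : Function.Periodic F (2 * π))
    (hint : ∀ a b : ℝ, IntervalIntegrable F MeasureTheory.volume a b) :
    ∫ θ in (-π)..π, F (2 * θ) = ∫ θ in (-π)..π, F θ := by
  rw [intervalIntegral.integral_comp_mul_left F (two_ne_zero)]
  have h1 : ∫ θ in (2 * -π)..(2 * π), F θ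
      = (∫ θ in (2 * -π)..(0:ℝ), F θ) + ∫ θ in (0:ℝ)..(2 * π), F θ := by
    rw [intervalIntegral.integral_add_adjacent_intervals (hint _ _) (hint _ _)]
  have h2 : ∫ θ in (2 * -π)..(0:ℝ), F θ = ∫ θ in (-π)..π, F θ := by
    have := hper.intervalIntegral_add_eq (2 * -π) (-π)
    rw [show 2 * -π + 2 * π = 0 by ring, show -π + 2 * π = π by ring] at this
    exact this
  have h3 : ∫ θ in (0:ℝ)..(2 * π), F θ = ∫ θ in (-π)..π, F θ := by
    have := hper.intervalIntegral_add_eq (0:ℝ) (-π)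
    rw [zero_add, show -π + 2 * π = π by ring] at this
    exact this
  rw [h1, h2, h3, smul_eq_mul]
  ring

lemma integral_antiper (F : ℝ → ℝ) (hF : Continuous F)
    (hanti : ∀ x, F (x + π) = -F x) :
    ∫ θ in (-π)..π, F θ = 0 := by
  have h1 : ∫ θ in (-π)..π, F θ
      = (∫ θ in (-π)..(0:ℝ), F θ) + ∫ θ in (0:ℝ)..π, F θ := by
    rw [intervalIntegral.integral_add_adjacent_intervals
      (hF.intervalIntegrable _ _) (hF.intervalIntegrable _ _)]
  have h2 : ∫ θ in (0:ℝ)..π, F θ = ∫ θ in (-π)..(0:ℝ), F (θ + π) := by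
    rw [intervalIntegral.integral_comp_add_right]
    norm_num
  rw [h1, h2]
  simp only [hanti]
  rw [intervalIntegral.integral_neg]
  ring

lemma key (n : ℕ) : ∀ h : ℕ → Bool,
    ∫ θ in (-π)..π, prodf n h θ = 2 * π / 2 ^ n := by
  induction n with
  | zero =>
    intro h
    simp [prodf]
    ring
  | succ n ih =>
    intro h
    have hsplit : ∀ θ : ℝ, prodf (n + 1) h θ
        = (1 / 2 + (if h 0 then -1 else 1) * Real.cos (2 * θ) / 2)
          * prodf n (fun j => h (j + 1)) (2 * θ) := by
      intro θ
      unfold prodf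
      rw [Finset.prod_range_succ']
      have e1 : (trg (h 0) (2 ^ 0 * θ)) ^ 2
          = 1 / 2 + (if h 0 then -1 else 1) * Real.cos (2 * θ) / 2 := by
        cases hb : h 0 <;>
          simp [trg, hb, Real.cos_sq, Real.sin_sq_eq_half_sub] <;> ring
      have e2 : ∀ j, trg (h (j + 1)) (2 ^ (j + 1) * θ) ^ 2
          = trg (h (j + 1)) (2 ^ j * (2 * θ)) ^ 2 := by
        intro j; ring_nf
      rw [mul_comm, e1]
      congr 1
      exact Finset.prod_congr rfl fun j _ => e2 j
    set h' : ℕ → Bool := fun j => h (j + 1) with hh'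
    have hc := cont_prodf n h'
    have hper := prodf_periodic n h'
    calc ∫ θ in (-π)..π, prodf (n + 1) h θ
        = ∫ θ in (-π)..π, ((1/2) * prodf n h' (2 * θ)
            + ((if h 0 then -1 else 1)/2) * (Real.cos (2*θ) * prodf n h' (2 * θ))) := by
          refine intervalIntegral.integral_congr fun θ _ => ?_
          rw [hsplit θ]; ring
      _ = (1/2) * (∫ θ in (-π)..π, prodf n h' (2 * θ))
            + ((if h 0 then -1 else 1)/2)
              * ∫ θ in (-π)..π, (Real.cos (2*θ) * prodf n h' (2 * θ)) := by
          rw [intervalIntegral.integral_add, intervalIntegral.integral_const_mul,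
            intervalIntegral.integral_const_mul]
          · exact (continuous_const.mul (hc.comp (continuous_const.mul
              continuous_id))).intervalIntegrable _ _
          · exact (continuous_const.mul ((Real.continuous_cos.comp
              (continuous_const.mul continuous_id)).mul
              (hc.comp (continuous_const.mul continuous_id)))).intervalIntegrable _ _
      _ = 2 * π / 2 ^ (n + 1) := by
          have i1 : ∫ θ in (-π)..π, prodf n h' (2 * θ) = 2 * π / 2 ^ n := by
            have per2 : Function.Periodic (prodf n h') (2*π) := by
              intro x
              rw [show x + 2*π = x + π + π by ring, hper (x+π), hper x]
            rw [integral_comp_two (prodf n h') per2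
              (fun a b => hc.intervalIntegrable a b)]
            exact ih h'
          have i2 : ∫ θ in (-π)..π, (Real.cos (2*θ) * prodf n h' (2 * θ)) = 0 := by
            have : ∀ θ : ℝ, Real.cos (2*θ) * prodf n h' (2 * θ)
                = (fun ψ => Real.cos ψ * prodf n h' ψ) (2 * θ) := fun θ => rfl
            rw [intervalIntegral.integral_congr (fun θ _ => this θ)]
            have hcont : Continuous fun ψ => Real.cos ψ * prodf n h' ψ :=
              Real.continuous_cos.mul hc
            have per2 : Function.Periodic (fun ψ => Real.cos ψ * prodf n h' ψ) (2*π) := by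
              intro x
              have hq : prodf n h' (x + 2*π) = prodf n h' x := by
                rw [show x + 2*π = x + π + π by ring, hper (x+π), hper x]
              simp only [Real.cos_add_two_pi, hq]
            rw [integral_comp_two _ per2 (fun a b => hcont.intervalIntegrable a b)]
            exact integral_antiper _ hcont (fun x => by
              simp only [Real.cos_add_pi, hper x, neg_mul])
          rw [i1, i2]
          ring

/-- For every index `j ∈ {0,…,N−1}`, the expectation over `θ` drawn
uniformly from `[−π, π]` satisfies `E_θ[x_j(θ)²] = 1/N`. -/
lemma prod_Icc_one_eq_range (f : ℕ → ℝ) (n : ℕ) :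
    ∏ k ∈ Finset.Icc 1 n, f k = ∏ i ∈ Finset.range n, f (i + 1) := by
  induction n with
  | zero => simp
  | succ n ih =>
    rw [Finset.prod_Icc_succ_top (Nat.le_add_left 1 n), ih, Finset.prod_range_succ]

theorem stmt_2 (N : ℕ) (hN : 1 ≤ N) (j : Fin N) :
    (2 * Real.pi)⁻¹ * ∫ θ in (-Real.pi)..Real.pi, (xvec N θ j) ^ 2 = 1 / N := by
  set n := Nat.clog 2 N with hn
  set b : ℕ → Bool := fun k => decide (j.val / 2 ^ (n - k) % 2 = 1) with hb
  have hNpos : (0:ℝ) < N := by exact_mod_cast hN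
  have hxsq : ∀ θ : ℝ, (xvec N θ j) ^ 2
      = ((2:ℝ) ^ n / N) * prodf n (fun i => b (i + 1)) (2 * θ) := by
    intro θ
    unfold xvec
    rw [mul_pow, Real.sq_sqrt (by positivity), ← Finset.prod_pow]
    congr 1
    have : ∀ k, ((if j.val / 2 ^ (n - k) % 2 = 1
        then Real.sin ((2:ℝ) ^ k * θ) else Real.cos ((2:ℝ) ^ k * θ)) ^ 2)
        = trg (b k) ((2:ℝ) ^ k * θ) ^ 2 := by
      intro k
      by_cases hc : j.val / 2 ^ (n - k) % 2 = 1 <;> simp [trg, hb, hc]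
    rw [Finset.prod_congr rfl (fun k _ => this k), prod_Icc_one_eq_range]
    unfold prodf
    refine Finset.prod_congr rfl fun i _ => ?_
    congr 1
    ring
  rw [intervalIntegral.integral_congr (fun θ _ => hxsq θ),
    intervalIntegral.integral_const_mul]
  set h' : ℕ → Bool := fun i => b (i + 1)
  have hc := cont_prodf n h'
  have hper := prodf_periodic n h'
  have per2 : Function.Periodic (prodf n h') (2*π) := by
    intro x
    rw [show x + 2*π = x + π + π by ring, hper (x+π), hper x]
  rw [integral_comp_two (prodf n h') per2
    (fun a b => hc.intervalIntegrable a b), key n h']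
  have hπ := Real.pi_ne_zero
  field_simp
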